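/- Let N be a δ-net in operator norm of the orthogonal group O(d). Then for any real d×d matrix A, max_{Q ∈ N} ⟨A, Q⟩ ≥ (1 − δ²/2) ‖A‖_*, where ‖A‖_* denotes the nuclear norm (sum of singular values) and ⟨A,Q⟩ = trace(AᵀQ). -/

import Mathlib

open Matrix

/-- Operator (spectral) norm of a square real matrix. -/
noncomputable def opNorm {d : ℕ} (A : Matrix (Fin d) (Fin d) ℝ) : ℝ :=
  ‖Matrix.toEuclideanCLM (𝕜 := ℝ) A‖

/-- Nuclear norm: sum of the singular values of `A`. -/
noncomputable def nuclearNorm {d : ℕ} (A : Matrix (Fin d) (Fin d) ℝ) : ℝ :=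
  ∑ i, Real.sqrt ((Matrix.isHermitian_conjTranspose_mul_self A).eigenvalues i)

/-- Matrix inner product `⟨A, B⟩ = trace (Aᵀ B)`. -/
def mip {d : ℕ} (A B : Matrix (Fin d) (Fin d) ℝ) : ℝ := (Aᵀ * B).trace

namespace StmtAux

variable {d : ℕ}

open scoped MatrixOrder

lemma conjT_eq_transpose (A : Matrix (Fin d) (Fin d) ℝ) : Aᴴ = Aᵀ := by
  ext i j; simp [Matrix.conjTranspose_apply]

lemma mem_orth_iff (Q : Matrix (Fin d) (Fin d) ℝ) :
    Q ∈ Matrix.orthogonalGroup (Fin d) ℝ ↔ Qᵀ * Q = 1 := by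
  rw [Matrix.mem_orthogonalGroup_iff']

lemma psd_trace_nonneg {P : Matrix (Fin d) (Fin d) ℝ} (hP : P.PosSemidef) : 0 ≤ P.trace := by
  rw [Matrix.trace]
  apply Finset.sum_nonneg
  intro i _
  have := hP.dotProduct_mulVec_nonneg (Pi.single i 1)
  simpa [star_trivial, Matrix.mulVec_single, dotProduct, Pi.single_apply, Finset.sum_ite_eq] using this

/-- trace of product of two PSD matrices is nonnegative -/
lemma psd_trace_mul_nonneg {P Q : Matrix (Fin d) (Fin d) ℝ} (hP : P.PosSemidef)
    (hQ : Q.PosSemidef) : 0 ≤ (P * Q).trace := by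
  have h1 : P = CFC.sqrt P * CFC.sqrt P :=
    (CFC.sqrt_mul_sqrt_self P (nonneg_iff_posSemidef.mpr hP)).symm
  have h2 : (P * Q).trace = (CFC.sqrt P * Q * CFC.sqrt P).trace := by
    rw [Matrix.trace_mul_cycle, ← h1]
  rw [h2]
  have h3 : (CFC.sqrt P * Q * (CFC.sqrt P)ᴴ).PosSemidef :=
    hQ.mul_mul_conjTranspose_same (CFC.sqrt P)
  have h4 : (CFC.sqrt P)ᴴ = CFC.sqrt P :=
    (nonneg_iff_posSemidef.mp (CFC.sqrt_nonneg P)).isHermitian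
  rw [h4] at h3
  exact psd_trace_nonneg h3

section compact
attribute [local instance] Matrix.normedAddCommGroup Matrix.normedSpace

lemma exists_max_mip (A : Matrix (Fin d) (Fin d) ℝ) :
    ∃ Q₀ ∈ Matrix.orthogonalGroup (Fin d) ℝ, ∀ Q ∈ Matrix.orthogonalGroup (Fin d) ℝ,
      mip A Q ≤ mip A Q₀ := by
  set S : Set (Matrix (Fin d) (Fin d) ℝ) := {Q | Qᵀ * Q = 1} with hS
  have hmem : ∀ Q : Matrix (Fin d) (Fin d) ℝ,
      Q ∈ Matrix.orthogonalGroup (Fin d) ℝ ↔ Q ∈ S := fun Q => mem_orth_iff Q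
  have hclosed : IsClosed S := by
    have : Continuous fun Q : Matrix (Fin d) (Fin d) ℝ => Qᵀ * Q :=
      (continuous_id.matrix_transpose).matrix_mul continuous_id
    exact isClosed_eq this continuous_const
  have hbdd : Bornology.IsBounded S := by
    rw [isBounded_iff_forall_norm_le]
    refine ⟨1, fun Q hQ => ?_⟩
    rw [Matrix.norm_le_iff zero_le_one]
    intro i j
    have hcol : ∑ k, Q k j * Q k j = 1 := by
      have := congrFun (congrFun hQ j) j
      simpa [Matrix.mul_apply, Matrix.transpose_apply, Matrix.one_apply] using this
    have h1 : Q i j * Q i j ≤ 1 := by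
      rw [← hcol]
      exact Finset.single_le_sum (f := fun k => Q k j * Q k j)
        (fun k _ => mul_self_nonneg _) (Finset.mem_univ i)
    rw [Real.norm_eq_abs]
    exact abs_le_one_iff_mul_self_le_one.mpr h1
  have hcompact : IsCompact S := Metric.isCompact_of_isClosed_isBounded hclosed hbdd
  have hne : S.Nonempty := ⟨1, by simp [hS]⟩
  have hcont : Continuous fun Q : Matrix (Fin d) (Fin d) ℝ => mip A Q :=
    ((continuous_const.matrix_mul continuous_id).matrix_trace)
  obtain ⟨Q₀, hQ₀S, hmax⟩ := hcompact.exists_isMaxOn hne hcont.continuousOn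
  exact ⟨Q₀, (hmem Q₀).mpr hQ₀S, fun Q hQ => hmax ((hmem Q).mp hQ)⟩

end compact

section deriv
open NormedSpace
attribute [local instance] Matrix.linftyOpNormedAddCommGroup Matrix.linftyOpNormedRing
  Matrix.linftyOpNormedAlgebra

/-- exp of a skew matrix is orthogonal -/
lemma exp_skew_orth {K : Matrix (Fin d) (Fin d) ℝ} (hK : Kᵀ = -K) (t : ℝ) :
    (exp (t • K))ᵀ * exp (t • K) = 1 := by
  have h1 : (exp (t • K))ᵀ = exp (-(t • K)) := by
    rw [← Matrix.exp_transpose, Matrix.transpose_smul, hK, smul_neg]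
  have h2 : exp (-(t • K) + t • K) = exp (-(t • K)) * exp (t • K) :=
    Matrix.exp_add_of_commute (-(t • K)) (t • K) (Commute.neg_left (Commute.refl _))
  rw [h1, ← h2, neg_add_cancel, exp_zero]

lemma trace_mul_skew_eq_zero {M : Matrix (Fin d) (Fin d) ℝ}
    (hmax : ∀ R : Matrix (Fin d) (Fin d) ℝ, Rᵀ * R = 1 → (M * R).trace ≤ M.trace)
    {K : Matrix (Fin d) (Fin d) ℝ} (hK : Kᵀ = -K) : (M * K).trace = 0 := by
  set L : Matrix (Fin d) (Fin d) ℝ →ₗ[ℝ] ℝ :=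
    (Matrix.traceLinearMap (Fin d) ℝ ℝ).comp (LinearMap.mulLeft ℝ M) with hL
  have hE : HasDerivAt (fun t : ℝ => exp (t • K)) (exp ((0:ℝ) • K) * K) 0 :=
    hasDerivAt_exp_smul_const (𝕂 := ℝ) K (0:ℝ)
  have hE' : HasDerivAt (fun t : ℝ => exp (t • K)) K 0 := by
    simpa using hE
  have hf : HasDerivAt (fun t : ℝ => (M * exp (t • K)).trace) ((M * K).trace) 0 := by
    have := (L.toContinuousLinearMap.hasFDerivAt
      (x := exp ((0:ℝ) • K))).comp_hasDerivAt 0 hE'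
    exact this
  have hloc : IsLocalMax (fun t : ℝ => (M * exp (t • K)).trace) 0 := by
    apply Filter.Eventually.of_forall
    intro t
    have := hmax (exp (t • K)) (exp_skew_orth hK t)
    simpa using this
  exact hloc.hasDerivAt_eq_zero hf

end deriv

lemma symm_of_max {M : Matrix (Fin d) (Fin d) ℝ}
    (hmax : ∀ R : Matrix (Fin d) (Fin d) ℝ, Rᵀ * R = 1 → (M * R).trace ≤ M.trace) :
    Mᵀ = M := by
  ext i j
  have hK : (Matrix.single i j (1:ℝ) - Matrix.single j i 1)ᵀ
      = -(Matrix.single i j (1:ℝ) - Matrix.single j i 1) := by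
    ext a b
    simp only [Matrix.transpose_apply, Matrix.sub_apply, Matrix.neg_apply,
      Matrix.single, Matrix.of_apply]
    by_cases h1 : i = b <;> by_cases h2 : j = a <;> by_cases h3 : j = b <;>
      by_cases h4 : i = a <;> simp [h1, h2, h3, h4, and_comm]
  have h := trace_mul_skew_eq_zero hmax hK
  have hsub : (M * Matrix.single i j (1:ℝ)).trace
      - (M * Matrix.single j i (1:ℝ)).trace = 0 := by
    rw [← Matrix.trace_sub, ← Matrix.mul_sub]; exact h
  have e1 : ∀ a b : Fin d, (M * Matrix.single a b (1:ℝ)).trace = M b a := by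
    intro a b
    rw [Matrix.trace_mul_comm, Matrix.trace]
    rw [Finset.sum_eq_single a]
    · simp
    · intro c _ hc
      simp [Matrix.single_mul_apply_of_ne (h := hc)]
    · simp
  rw [e1, e1] at hsub
  rw [Matrix.transpose_apply]
  linarith

lemma vecMulVec_self_mul {v : Fin d → ℝ} (hv : v ⬝ᵥ v = 1) :
    Matrix.vecMulVec v v * Matrix.vecMulVec v v = Matrix.vecMulVec v v := by
  ext i j
  simp only [Matrix.mul_apply, Matrix.vecMulVec_apply]
  have h2 : ∑ k, v i * v k * (v k * v j) = (v i * v j) * ∑ k, v k * v k := by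
    rw [Finset.mul_sum]; apply Finset.sum_congr rfl; intros; ring
  rw [h2]
  have h3 : ∑ k, v k * v k = 1 := hv
  rw [h3, mul_one]

lemma householder_orth {v : Fin d → ℝ} (hv : v ⬝ᵥ v = 1) :
    ((1 : Matrix (Fin d) (Fin d) ℝ) - (2:ℝ) • Matrix.vecMulVec v v)ᵀ
      * ((1 : Matrix (Fin d) (Fin d) ℝ) - (2:ℝ) • Matrix.vecMulVec v v) = 1 := by
  have hW : (Matrix.vecMulVec v v)ᵀ = Matrix.vecMulVec v v := by
    ext i j; simp [Matrix.vecMulVec_apply, mul_comm]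
  rw [Matrix.transpose_sub, Matrix.transpose_one, Matrix.transpose_smul, hW]
  have expand : ((1 : Matrix (Fin d) (Fin d) ℝ) - (2:ℝ) • Matrix.vecMulVec v v)
      * ((1 : Matrix (Fin d) (Fin d) ℝ) - (2:ℝ) • Matrix.vecMulVec v v)
      = 1 - (2:ℝ) • Matrix.vecMulVec v v - (2:ℝ) • Matrix.vecMulVec v v
        + ((2:ℝ)*(2:ℝ)) • (Matrix.vecMulVec v v * Matrix.vecMulVec v v) := by
    simp only [mul_sub, sub_mul, mul_one, one_mul, Matrix.smul_mul, Matrix.mul_smul, smul_smul]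
    module
  rw [expand, vecMulVec_self_mul hv]
  module

lemma trace_mul_vecMulVec (M : Matrix (Fin d) (Fin d) ℝ) (v : Fin d → ℝ) :
    (M * Matrix.vecMulVec v v).trace = v ⬝ᵥ M *ᵥ v := by
  simp only [Matrix.trace, Matrix.diag, Matrix.mul_apply, Matrix.vecMulVec_apply,
    dotProduct, Matrix.mulVec]
  apply Finset.sum_congr rfl
  intros i _
  rw [Finset.mul_sum]
  apply Finset.sum_congr rfl
  intros j _
  ring

lemma psd_of_max {M : Matrix (Fin d) (Fin d) ℝ}
    (hmax : ∀ R : Matrix (Fin d) (Fin d) ℝ, Rᵀ * R = 1 → (M * R).trace ≤ M.trace)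
    (hsymm : Mᵀ = M) : M.PosSemidef := by
  refine Matrix.PosSemidef.of_dotProduct_mulVec_nonneg ?_ ?_
  · show Mᴴ = M
    rw [conjT_eq_transpose]; exact hsymm
  · intro x
    rw [star_trivial]
    by_cases hx : x = 0
    · simp [hx]
    · set t : ℝ := Real.sqrt (x ⬝ᵥ x) with ht
      have hxx : 0 < x ⬝ᵥ x := by
        have h1 : 0 ≤ x ⬝ᵥ x := Finset.sum_nonneg fun i _ => mul_self_nonneg _
        rcases h1.lt_or_eq with h | h
        · exact h
        · exfalso; apply hx
          funext i
          simp only [Pi.zero_apply]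
          have h2 : ∀ k ∈ Finset.univ, (0:ℝ) ≤ x k * x k := fun k _ => mul_self_nonneg _
          have h3 := (Finset.sum_eq_zero_iff_of_nonneg h2).mp h.symm i (Finset.mem_univ i)
          nlinarith [h3]
      have ht0 : 0 < t := Real.sqrt_pos.mpr hxx
      set v : Fin d → ℝ := t⁻¹ • x with hv
      have hts : t * t = x ⬝ᵥ x := Real.mul_self_sqrt hxx.le
      have hvv : v ⬝ᵥ v = 1 := by
        rw [hv, smul_dotProduct, dotProduct_smul, smul_eq_mul, smul_eq_mul]
        rw [← hts]
        field_simp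
      have hineq := hmax _ (householder_orth hvv)
      have hexp : (M * ((1 : Matrix (Fin d) (Fin d) ℝ) - (2:ℝ) • Matrix.vecMulVec v v)).trace
          = M.trace - 2 * (v ⬝ᵥ M *ᵥ v) := by
        rw [Matrix.mul_sub, Matrix.trace_sub, Matrix.mul_one, Matrix.mul_smul,
          Matrix.trace_smul, trace_mul_vecMulVec]
        simp
      rw [hexp] at hineq
      have hv0 : 0 ≤ v ⬝ᵥ M *ᵥ v := by linarith
      have hscale : (t * t) * (v ⬝ᵥ M *ᵥ v) = x ⬝ᵥ M *ᵥ x := by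
        rw [hv, smul_dotProduct, Matrix.mulVec_smul, dotProduct_smul,
          smul_eq_mul, smul_eq_mul]
        field_simp
      rw [← hscale]
      positivity

lemma trace_sqrt_eq (A : Matrix (Fin d) (Fin d) ℝ) (hP : (Aᵀ * A).PosSemidef) :
    (CFC.sqrt (Aᵀ * A)).trace = nuclearNorm A := by
  rw [CFC.sqrt_eq_real_sqrt _ (nonneg_iff_posSemidef.mpr hP), cfcₙ_eq_cfc]
  have hAA : Aᵀ * A = Aᴴ * A := by rw [conjT_eq_transpose]
  rw [hAA, (Matrix.isHermitian_conjTranspose_mul_self A).cfc_eq, Matrix.IsHermitian.cfc,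
    Unitary.conjStarAlgAut_apply]
  rw [Matrix.trace_mul_cycle]
  have h1 : (star (Matrix.isHermitian_conjTranspose_mul_self A).eigenvectorUnitary :
      Matrix (Fin d) (Fin d) ℝ) * (Matrix.isHermitian_conjTranspose_mul_self A).eigenvectorUnitary.1
      = 1 := Matrix.UnitaryGroup.star_mul_self _
  rw [h1, Matrix.one_mul, Matrix.trace_diagonal]
  unfold nuclearNorm
  apply Finset.sum_congr rfl
  intro i _
  simp

lemma trace_eq_nuclearNorm_of_sq (A : Matrix (Fin d) (Fin d) ℝ) {M : Matrix (Fin d) (Fin d) ℝ}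
    (hMpsd : M.PosSemidef) (hM2 : M ^ 2 = Aᵀ * A) (hAA : (Aᵀ * A).PosSemidef) :
    M.trace = nuclearNorm A := by
  have hMsqrt : M = CFC.sqrt (Aᵀ * A) := by
    rw [← hM2, CFC.sqrt_sq M (nonneg_iff_posSemidef.mpr hMpsd)]
  rw [hMsqrt]; exact trace_sqrt_eq A hAA

lemma opNorm_dot_bound {B : Matrix (Fin d) (Fin d) ℝ} {δ : ℝ} (hB : opNorm B ≤ δ)
    (x : Fin d → ℝ) : (B *ᵥ x) ⬝ᵥ (B *ᵥ x) ≤ δ ^ 2 * (x ⬝ᵥ x) := by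
  set y : EuclideanSpace ℝ (Fin d) := (WithLp.equiv 2 _).symm x with hy
  have happ : Matrix.toEuclideanCLM (𝕜 := ℝ) B y = (WithLp.equiv 2 _).symm (B *ᵥ x) :=
    Matrix.toEuclideanCLM_toLp B x
  have hle : ‖Matrix.toEuclideanCLM (𝕜 := ℝ) B y‖ ≤ δ * ‖y‖ := by
    calc ‖Matrix.toEuclideanCLM (𝕜 := ℝ) B y‖
        ≤ ‖Matrix.toEuclideanCLM (𝕜 := ℝ) B‖ * ‖y‖ := ContinuousLinearMap.le_opNorm _ _
      _ ≤ δ * ‖y‖ := by gcongr; exact hB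
  have hnorm : ∀ v : Fin d → ℝ,
      ‖((WithLp.equiv 2 (Fin d → ℝ)).symm v : EuclideanSpace ℝ (Fin d))‖ ^ 2 = v ⬝ᵥ v := by
    intro v
    rw [EuclideanSpace.norm_eq]
    rw [Real.sq_sqrt (Finset.sum_nonneg fun i _ => sq_nonneg _)]
    simp [dotProduct, sq]
  have h2 : ‖Matrix.toEuclideanCLM (𝕜 := ℝ) B y‖ ^ 2 ≤ (δ * ‖y‖) ^ 2 := by
    apply sq_le_sq' _ hle
    nlinarith [norm_nonneg (Matrix.toEuclideanCLM (𝕜 := ℝ) B y)]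
  rw [happ, hnorm] at h2
  calc (B *ᵥ x) ⬝ᵥ (B *ᵥ x) ≤ (δ * ‖y‖) ^ 2 := h2
    _ = δ ^ 2 * ‖y‖ ^ 2 := by ring
    _ = δ ^ 2 * (x ⬝ᵥ x) := by rw [hy, hnorm]

lemma orth_dot {Q : Matrix (Fin d) (Fin d) ℝ} (hQ : Qᵀ * Q = 1) (x : Fin d → ℝ) :
    (Q *ᵥ x) ⬝ᵥ (Q *ᵥ x) = x ⬝ᵥ x := by
  rw [Matrix.dotProduct_mulVec, Matrix.vecMul_mulVec, hQ, Matrix.vecMul_one]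

end StmtAux

open StmtAux in
/-- If `N` is a `δ`-net in operator norm of the orthogonal group `O(d)`, then for any real
`d × d` matrix `A`, `max_{Q ∈ N} ⟨A, Q⟩ ≥ (1 - δ²/2) ‖A‖_*`. -/
theorem stmt0 {d : ℕ} (δ : ℝ) (N : Set (Matrix (Fin d) (Fin d) ℝ))
    (hN_sub : ∀ Q ∈ N, Q ∈ Matrix.orthogonalGroup (Fin d) ℝ)
    (hN_net : ∀ Q ∈ Matrix.orthogonalGroup (Fin d) ℝ, ∃ Q' ∈ N, opNorm (Q - Q') ≤ δ)
    (A : Matrix (Fin d) (Fin d) ℝ) :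
    ∃ Q ∈ N, (1 - δ ^ 2 / 2) * nuclearNorm A ≤ mip A Q := by
  -- maximizer Q₀ of mip A over the orthogonal group
  obtain ⟨Q₀, hQ₀mem, hQ₀max⟩ := exists_max_mip A
  have hQ₀ : Q₀ᵀ * Q₀ = 1 := (mem_orth_iff Q₀).mp hQ₀mem
  have hQ₀' : Q₀ * Q₀ᵀ = 1 := mul_eq_one_comm.mp hQ₀
  -- M = Aᵀ Q₀
  set M : Matrix (Fin d) (Fin d) ℝ := Aᵀ * Q₀ with hM
  have hmax : ∀ R : Matrix (Fin d) (Fin d) ℝ, Rᵀ * R = 1 → (M * R).trace ≤ M.trace := by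
    intro R hR
    have hQR : (Q₀ * R)ᵀ * (Q₀ * R) = 1 := by
      rw [Matrix.transpose_mul, Matrix.mul_assoc, ← Matrix.mul_assoc Q₀ᵀ Q₀ R, hQ₀,
        Matrix.one_mul, hR]
    have := hQ₀max (Q₀ * R) ((mem_orth_iff _).mpr hQR)
    unfold mip at this
    rw [← Matrix.mul_assoc] at this
    exact this
  have hsymm : Mᵀ = M := symm_of_max hmax
  have hMpsd : M.PosSemidef := psd_of_max hmax hsymm
  -- M² = Aᵀ A
  have hM2 : M ^ 2 = Aᵀ * A := by
    rw [pow_two]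
    nth_rewrite 2 [← hsymm]
    rw [hM, Matrix.transpose_mul, Matrix.transpose_transpose, Matrix.mul_assoc,
      ← Matrix.mul_assoc Q₀ Q₀ᵀ A, hQ₀', Matrix.one_mul]
  have hAA : (Aᵀ * A).PosSemidef := by rw [← hM2]; exact hMpsd.pow 2
  have htrM : M.trace = nuclearNorm A := trace_eq_nuclearNorm_of_sq A hMpsd hM2 hAA
  -- pick Q' in the net near Q₀
  obtain ⟨Q', hQ'N, hQ'δ⟩ := hN_net Q₀ hQ₀mem
  have hQ'orth : Q'ᵀ * Q' = 1 := (mem_orth_iff Q').mp (hN_sub Q' hQ'N)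
  refine ⟨Q', hQ'N, ?_⟩
  set R : Matrix (Fin d) (Fin d) ℝ := Q₀ᵀ * Q' with hR
  have hQ₀R : Q₀ * R = Q' := by rw [hR, ← Matrix.mul_assoc, hQ₀', Matrix.one_mul]
  have hRorth : Rᵀ * R = 1 := by
    rw [hR, Matrix.transpose_mul, Matrix.transpose_transpose, Matrix.mul_assoc,
      ← Matrix.mul_assoc Q₀ Q₀ᵀ Q', hQ₀', Matrix.one_mul, hQ'orth]
  -- the PSD matrix D = (δ²/2)•1 - (1 - (R + Rᵀ)/2)
  set T : Matrix (Fin d) (Fin d) ℝ := 1 - (2⁻¹:ℝ) • (R + Rᵀ) with hT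
  set D : Matrix (Fin d) (Fin d) ℝ := (δ ^ 2 / 2) • (1 : Matrix (Fin d) (Fin d) ℝ) - T with hD
  have hQ₀Torth : (Q₀ᵀ)ᵀ * Q₀ᵀ = 1 := by rw [Matrix.transpose_transpose, hQ₀']
  have hDpsd : D.PosSemidef := by
    refine Matrix.PosSemidef.of_dotProduct_mulVec_nonneg ?_ ?_
    · show Dᴴ = D
      rw [conjT_eq_transpose, hD, hT]
      simp only [Matrix.transpose_sub, Matrix.transpose_smul, Matrix.transpose_one,
        Matrix.transpose_add, Matrix.transpose_transpose]
      rw [add_comm Rᵀ R]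
    · intro x
      rw [star_trivial]
      have hb : x ⬝ᵥ (Rᵀ *ᵥ x) = x ⬝ᵥ (R *ᵥ x) := by
        rw [Matrix.dotProduct_mulVec, Matrix.vecMul_transpose, dotProduct_comm]
      have hRx : (R *ᵥ x) ⬝ᵥ (R *ᵥ x) = x ⬝ᵥ x := orth_dot hRorth x
      have hw : ((1 - R) *ᵥ x) ⬝ᵥ ((1 - R) *ᵥ x) ≤ δ ^ 2 * (x ⬝ᵥ x) := by
        have h1R : (1 : Matrix (Fin d) (Fin d) ℝ) - R = Q₀ᵀ * (Q₀ - Q') := by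
          rw [Matrix.mul_sub, hQ₀, hR]
        rw [h1R, ← Matrix.mulVec_mulVec, orth_dot hQ₀Torth]
        exact opNorm_dot_bound hQ'δ x
      have hexpand : ((1 - R) *ᵥ x) ⬝ᵥ ((1 - R) *ᵥ x)
          = 2 * (x ⬝ᵥ x - x ⬝ᵥ (R *ᵥ x)) := by
        rw [Matrix.sub_mulVec, Matrix.one_mulVec, dotProduct_sub,
          sub_dotProduct, sub_dotProduct, hRx,
          dotProduct_comm (R *ᵥ x) x]
        ring
      have hDx : x ⬝ᵥ D *ᵥ x
          = δ ^ 2 / 2 * (x ⬝ᵥ x) - (x ⬝ᵥ x - x ⬝ᵥ (R *ᵥ x)) := by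
        rw [hD, hT]
        rw [Matrix.sub_mulVec, dotProduct_sub, Matrix.smul_mulVec,
          Matrix.one_mulVec, dotProduct_smul, Matrix.sub_mulVec, Matrix.one_mulVec,
          dotProduct_sub, Matrix.smul_mulVec, dotProduct_smul,
          Matrix.add_mulVec, dotProduct_add, hb]
        simp only [smul_eq_mul]
        ring
      rw [hDx]
      linarith
  -- put it together
  have h0 : 0 ≤ (M * D).trace := psd_trace_mul_nonneg hMpsd hDpsd
  have htrMRT : (M * Rᵀ).trace = (M * R).trace := by
    calc (M * Rᵀ).trace = ((M * Rᵀ)ᵀ).trace := (Matrix.trace_transpose _).symm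
      _ = (R * Mᵀ).trace := by rw [Matrix.transpose_mul, Matrix.transpose_transpose]
      _ = (R * M).trace := by rw [hsymm]
      _ = (M * R).trace := Matrix.trace_mul_comm _ _
  have htrMD : (M * D).trace
      = δ ^ 2 / 2 * M.trace - (M.trace - (M * R).trace) := by
    rw [hD, hT]
    rw [Matrix.mul_sub, Matrix.trace_sub, Matrix.mul_smul, Matrix.trace_smul, Matrix.mul_one,
      Matrix.mul_sub, Matrix.trace_sub, Matrix.mul_one, Matrix.mul_smul, Matrix.trace_smul,
      Matrix.mul_add, Matrix.trace_add, htrMRT]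
    simp only [smul_eq_mul]
    ring
  rw [htrMD] at h0
  have hgoal : mip A Q' = (M * R).trace := by
    unfold mip
    rw [← hQ₀R, ← Matrix.mul_assoc, hM]
  rw [hgoal, ← htrM]
  linarith
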